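/- For every integer $t \ge 3$, the polynomial identity $w_3 \cdot S = g_{2^t-1}$ holds in $\mathbb{Z}_2[w_2,w_3]$, where $S = \sum_{k=0}^{\lfloor (2^{t-1}-2)/3 \rfloor} \binom{2^{t-1}-1-k}{2k+1} w_2^{2^{t-1}-2-3k} w_3^{2k}$. Consequently $S = g_{2^t-4}$. -/

import Mathlib

open MvPolynomial Finset

/-- `g r = ∑_{2b+3c=r} C(b+c,b) w₂^b w₃^c` in `ℤ₂[w₂,w₃]` (variable `X 0` is `w₂`, `X 1` is `w₃`). -/
noncomputable def g (r : ℕ) : MvPolynomial (Fin 2) (ZMod 2) :=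
  ∑ b ∈ Finset.range (r + 1), ∑ c ∈ Finset.range (r + 1),
    if 2 * b + 3 * c = r then
      C ((Nat.choose (b + c) b : ZMod 2)) * (X 0) ^ b * (X 1) ^ c
    else 0

lemma key_even (s : ℕ) : ∀ k : ℕ, ((Nat.choose (2 ^ s - 2 - k) (2 * k + 1) : ℕ) : ZMod 2) = 0 := by
  induction s with
  | zero =>
    intro k
    rw [show 2 ^ 0 - 2 - k = 0 from by omega, Nat.choose_eq_zero_of_lt (by omega)]
    simp
  | succ s ih =>
    intro k
    by_cases h : 2 ^ (s + 1) - 2 - k < 2 * k + 1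
    · rw [Nat.choose_eq_zero_of_lt h]; simp
    · have h2 : 2 ^ (s + 1) = 2 * 2 ^ s := by ring
      have hluc := (ZMod.natCast_eq_natCast_iff _ _ 2).mpr
        (Choose.choose_modEq_choose_mod_mul_choose_div_nat
          (p := 2) (n := 2 ^ (s + 1) - 2 - k) (k := 2 * k + 1))
      rw [hluc]
      push_cast
      rcases Nat.even_or_odd k with ⟨j, hj⟩ | ⟨j, hj⟩
      · rw [show (2 ^ (s + 1) - 2 - k) % 2 = 0 from by omega,
          show (2 * k + 1) % 2 = 1 from by omega]
        simp
      · rw [show (2 ^ (s + 1) - 2 - k) % 2 = 1 from by omega,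
          show (2 * k + 1) % 2 = 1 from by omega,
          show (2 ^ (s + 1) - 2 - k) / 2 = 2 ^ s - 2 - j from by omega,
          show (2 * k + 1) / 2 = 2 * j + 1 from by omega]
        rw [ih j]
        simp

lemma g_eq (r K : ℕ) (b c : ℕ → ℕ)
    (hbc : ∀ k < K, 2 * b k + 3 * c k = r)
    (hinj : ∀ k < K, ∀ l < K, c k = c l → k = l)
    (hsurj : ∀ b' c', 2 * b' + 3 * c' = r → ∃ k < K, b k = b' ∧ c k = c') :
    g r = ∑ k ∈ Finset.range K,
      C ((Nat.choose (b k + c k) (b k) : ZMod 2)) * (X 0) ^ (b k) * (X 1) ^ (c k) := by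
  rw [g, ← Finset.sum_product']
  rw [← Finset.sum_filter (fun p : ℕ × ℕ => 2 * p.1 + 3 * p.2 = r)
    (fun p : ℕ × ℕ => C ((Nat.choose (p.1 + p.2) p.1 : ZMod 2)) * (X 0) ^ p.1 * (X 1) ^ p.2)]
  have himg : Finset.filter (fun p : ℕ × ℕ => 2 * p.1 + 3 * p.2 = r)
      (Finset.range (r + 1) ×ˢ Finset.range (r + 1))
      = (Finset.range K).image (fun k => (b k, c k)) := by
    ext ⟨b', c'⟩
    simp only [Finset.mem_filter, Finset.mem_product, Finset.mem_range, Finset.mem_image,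
      Prod.mk.injEq]
    constructor
    · rintro ⟨⟨-, -⟩, h⟩
      obtain ⟨k, hk, hb, hc⟩ := hsurj b' c' h
      exact ⟨k, hk, hb, hc⟩
    · rintro ⟨k, hk, hb, hc⟩
      have := hbc k hk
      omega
  rw [himg, Finset.sum_image]
  intro k hk l hl h
  exact hinj k (by simpa using hk) l (by simpa using hl) (congrArg Prod.snd h)

theorem w3_mul_S_eq_g (t : ℕ) (ht : 3 ≤ t) :
    (X 1) * (∑ k ∈ Finset.range ((2 ^ (t - 1) - 2) / 3 + 1),
        C ((Nat.choose (2 ^ (t - 1) - 1 - k) (2 * k + 1) : ZMod 2)) *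
          (X 0) ^ (2 ^ (t - 1) - 2 - 3 * k) * (X 1) ^ (2 * k) : MvPolynomial (Fin 2) (ZMod 2))
      = g (2 ^ t - 1) ∧
    (∑ k ∈ Finset.range ((2 ^ (t - 1) - 2) / 3 + 1),
        C ((Nat.choose (2 ^ (t - 1) - 1 - k) (2 * k + 1) : ZMod 2)) *
          (X 0) ^ (2 ^ (t - 1) - 2 - 3 * k) * (X 1) ^ (2 * k) : MvPolynomial (Fin 2) (ZMod 2))
      = g (2 ^ t - 4) := by
  set n : ℕ := 2 ^ (t - 1) with hn
  set m : ℕ := (n - 2) / 3 with hm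
  have h2t : 2 ^ t = 2 * n := by
    rw [hn, ← pow_succ']
    congr 1
    omega
  have hn4 : 4 ≤ n := by
    rw [hn]
    calc (4 : ℕ) = 2 ^ 2 := by norm_num
    _ ≤ 2 ^ (t - 1) := Nat.pow_le_pow_right (by norm_num) (by omega)
  have h3m : 3 * m ≤ n - 2 := by
    rw [hm]; omega
  constructor
  · rw [g_eq (2 ^ t - 1) (m + 1) (fun k => n - 2 - 3 * k) (fun k => 2 * k + 1)
      (by intro k hk; omega)
      (by intro k hk l hl h; omega)
      (by intro b' c' h
          refine ⟨c' / 2, by omega, by omega, by omega⟩)]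
    rw [Finset.mul_sum]
    refine Finset.sum_congr rfl fun k hk => ?_
    simp only [Finset.mem_range] at hk
    have h3k : 3 * k ≤ n - 2 := by omega
    have hch : Nat.choose ((n - 2 - 3 * k) + (2 * k + 1)) (n - 2 - 3 * k)
        = Nat.choose (n - 1 - k) (2 * k + 1) := by
      rw [show (n - 2 - 3 * k) + (2 * k + 1) = n - 1 - k from by omega,
        show n - 2 - 3 * k = (n - 1 - k) - (2 * k + 1) from by omega]
      exact Nat.choose_symm (by omega)
    rw [hch, pow_succ]
    ring
  · rw [g_eq (2 ^ t - 4) (m + 1) (fun k => n - 2 - 3 * k) (fun k => 2 * k)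
      (by intro k hk; omega)
      (by intro k hk l hl h; omega)
      (by intro b' c' h
          refine ⟨c' / 2, by omega, by omega, by omega⟩)]
    refine Finset.sum_congr rfl fun k hk => ?_
    simp only [Finset.mem_range] at hk
    have h3k : 3 * k ≤ n - 2 := by omega
    have hch : Nat.choose ((n - 2 - 3 * k) + 2 * k) (n - 2 - 3 * k)
        = Nat.choose (n - 2 - k) (2 * k) := by
      rw [show (n - 2 - 3 * k) + 2 * k = n - 2 - k from by omega,
        show n - 2 - 3 * k = (n - 2 - k) - 2 * k from by omega]
      exact Nat.choose_symm (by omega)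
    rw [hch]
    have hpascal : Nat.choose (n - 1 - k) (2 * k + 1)
        = Nat.choose (n - 2 - k) (2 * k) + Nat.choose (n - 2 - k) (2 * k + 1) := by
      rw [show n - 1 - k = (n - 2 - k) + 1 from by omega]
      exact Nat.choose_succ_succ _ _
    have hkey := key_even (t - 1) k
    rw [← hn] at hkey
    congr 2
    rw [hpascal]
    push_cast
    rw [hkey, add_zero]
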